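/- Let K be a field, a, b positive integers with a ≤ b and g = gcd(a,b), let A be a set with {0,g} ⊆ A ⊆ {0,1,…,g}, and let ρ be a real number with ρ ≥ 1. Let I' be the ideal of K[x,y] generated by all monomials x^c y^d with bc + ad > ρ·ab, let I = I_A + I', and let J = (x^a, y^b). Then: (a) if I_A = J (i.e. A = {0,g}), then I² = J·I; (b) if I_A ≠ J, then the reduction number of I with respect to J equals the reduction number of I_A with respect to J. -/
import Mathlib


open MvPolynomial Pointwise

/-- The monomial `x^c y^d` in `K[x,y]`. -/
noncomputable def mono (K : Type*) [Field K] (c d : ℕ) : MvPolynomial (Fin 2) K :=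
  X 0 ^ c * X 1 ^ d

/-- The ideal `J = (x^a, y^b)`. -/
noncomputable def Jab (K : Type*) [Field K] (a b : ℕ) : Ideal (MvPolynomial (Fin 2) K) :=
  Ideal.span {mono K a 0, mono K 0 b}

/-- For `A ⊆ {0,…,g}` with `g = gcd(a,b)`, the ideal `I_A` generated by the
monomials `x^(i·(a/g)) y^(b − i·(b/g))` for `i ∈ A`. -/
noncomputable def IA (K : Type*) [Field K] (a b : ℕ) (A : Finset ℕ) :
    Ideal (MvPolynomial (Fin 2) K) :=
  Ideal.span ((fun i : ℕ =>
    mono K (i * (a / Nat.gcd a b)) (b - i * (b / Nat.gcd a b))) '' (A : Set ℕ))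

/-- The reduction number of `I` with respect to `J = (x^a, y^b)`: the least `r ≥ 0`
with `I^(r+1) = J·I^r`. -/
noncomputable def redNum (K : Type*) [Field K] (a b : ℕ)
    (I : Ideal (MvPolynomial (Fin 2) K)) : ℕ :=
  sInf {r : ℕ | I ^ (r + 1) = Jab K a b * I ^ r}

namespace Stmt14Aux

/-- exponent vector (c, d) -/
noncomputable def E (c d : ℕ) : Fin 2 →₀ ℕ := Finsupp.single 0 c + Finsupp.single 1 d

@[simp] lemma E_apply0 (c d : ℕ) : E c d 0 = c := by
  simp [E, Finsupp.single_apply]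

@[simp] lemma E_apply1 (c d : ℕ) : E c d 1 = d := by
  simp [E, Finsupp.single_apply]

lemma E_eq (s : Fin 2 →₀ ℕ) : E (s 0) (s 1) = s := by
  ext i
  fin_cases i <;> simp

/-- monomial ideal of an exponent set -/
noncomputable def MI (K : Type*) [Field K] (S : Set (Fin 2 →₀ ℕ)) :
    Ideal (MvPolynomial (Fin 2) K) :=
  Ideal.span ((fun s => monomial s (1 : K)) '' S)

variable {K : Type*} [Field K]

lemma mono_eq (c d : ℕ) : mono K c d = monomial (E c d) 1 := by
  rw [mono, X_pow_eq_monomial, X_pow_eq_monomial, monomial_mul, one_mul, E]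

lemma MI_mul (S T : Set (Fin 2 →₀ ℕ)) : MI K S * MI K T = MI K (S + T) := by
  rw [MI, MI, MI, Ideal.span_mul_span']
  congr 1
  ext f
  constructor
  · rintro ⟨x, ⟨s, hs, rfl⟩, y, ⟨t, ht, rfl⟩, rfl⟩
    exact ⟨s + t, ⟨s, hs, t, ht, rfl⟩, by simp [monomial_mul]⟩
  · rintro ⟨u, ⟨s, hs, t, ht, rfl⟩, rfl⟩
    exact ⟨monomial s 1, ⟨s, hs, rfl⟩, monomial t 1, ⟨t, ht, rfl⟩,
      by simp [monomial_mul]⟩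

lemma MI_add (S T : Set (Fin 2 →₀ ℕ)) : MI K S + MI K T = MI K (S ∪ T) := by
  rw [MI, MI, MI, Set.image_union, Ideal.span_union, Ideal.add_eq_sup]

lemma mem_MI {m : Fin 2 →₀ ℕ} {S : Set (Fin 2 →₀ ℕ)} :
    monomial m (1 : K) ∈ MI K S ↔ ∃ s ∈ S, s ≤ m := by
  rw [MI, mem_ideal_span_monomial_image]
  simp [support_monomial]

lemma MI_le_of {S T : Set (Fin 2 →₀ ℕ)} (h : ∀ s ∈ S, ∃ t ∈ T, t ≤ s) :
    MI K S ≤ MI K T := by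
  rw [MI, Ideal.span_le]
  rintro f ⟨s, hs, rfl⟩
  exact mem_MI.mpr (h s hs)

lemma MI_le_imp {S T : Set (Fin 2 →₀ ℕ)} (h : MI K S ≤ MI K T) :
    ∀ s ∈ S, ∃ t ∈ T, t ≤ s := by
  intro s hs
  have : monomial s (1 : K) ∈ MI K S := Ideal.subset_span ⟨s, hs, rfl⟩
  exact mem_MI.mp (h this)

lemma MI_mono {S T : Set (Fin 2 →₀ ℕ)} (h : S ⊆ T) : MI K S ≤ MI K T :=
  MI_le_of fun s hs => ⟨s, h hs, le_rfl⟩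

/-- n-fold sumset -/
def SP (S : Set (Fin 2 →₀ ℕ)) : ℕ → Set (Fin 2 →₀ ℕ)
  | 0 => {0}
  | n + 1 => S + SP S n

lemma MI_one : MI K ({0} : Set (Fin 2 →₀ ℕ)) = ⊤ := by
  rw [MI, Set.image_singleton, monomial_zero', C_1, Ideal.span_singleton_one]

lemma MI_pow (S : Set (Fin 2 →₀ ℕ)) (n : ℕ) : MI K S ^ n = MI K (SP S n) := by
  induction n with
  | zero => rw [pow_zero, SP, MI_one, Ideal.one_eq_top]
  | succ n ih => rw [pow_succ, ih, mul_comm, MI_mul, SP]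

/-- weight -/
def w (a b : ℕ) (s : Fin 2 →₀ ℕ) : ℕ := b * s 0 + a * s 1

lemma w_add (a b : ℕ) (s t : Fin 2 →₀ ℕ) : w a b (s + t) = w a b s + w a b t := by
  simp [w]; ring

lemma w_mono (a b : ℕ) {s t : Fin 2 →₀ ℕ} (h : s ≤ t) : w a b s ≤ w a b t := by
  have h0 := h 0
  have h1 := h 1
  simp only [w]
  exact Nat.add_le_add (Nat.mul_le_mul_left _ h0) (Nat.mul_le_mul_left _ h1)

end Stmt14Aux

namespace Stmt14Aux

noncomputable def SJ (a b : ℕ) : Set (Fin 2 →₀ ℕ) := {E a 0, E 0 b}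

noncomputable def SA (a b : ℕ) (A : Finset ℕ) : Set (Fin 2 →₀ ℕ) :=
  (fun i : ℕ => E (i * (a / Nat.gcd a b)) (b - i * (b / Nat.gcd a b))) '' (A : Set ℕ)

noncomputable def Sρ (a b : ℕ) (ρ : ℝ) : Set (Fin 2 →₀ ℕ) :=
  {s | ρ * ((a : ℝ) * (b : ℝ)) < (w a b s : ℝ)}

variable {K : Type*} [Field K]

lemma w_E (a b c d : ℕ) : w a b (E c d) = b * c + a * d := by simp [w]

lemma w_SJ {a b : ℕ} {u : Fin 2 →₀ ℕ} (h : u ∈ SJ a b) : w a b u = a * b := by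
  rcases h with h | h <;> subst h <;> simp [w_E, mul_comm]

lemma w_SA {a b : ℕ} {A : Finset ℕ} (hA2 : A ⊆ Finset.range (Nat.gcd a b + 1))
    {s : Fin 2 →₀ ℕ} (h : s ∈ SA a b A) : w a b s = a * b := by
  obtain ⟨i, hi, rfl⟩ := h
  have hig : i ≤ Nat.gcd a b := by
    have := hA2 hi
    simp only [Finset.mem_range] at this
    omega
  set g := Nat.gcd a b with hg
  have hga : g * (a / g) = a := Nat.mul_div_cancel' (Nat.gcd_dvd_left a b)
  have hgb : g * (b / g) = b := Nat.mul_div_cancel' (Nat.gcd_dvd_right a b)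
  have hib : i * (b / g) ≤ b := by
    calc i * (b / g) ≤ g * (b / g) := Nat.mul_le_mul_right _ hig
    _ = b := hgb
  have key : b * (i * (a / g)) = a * (i * (b / g)) := by
    calc b * (i * (a / g)) = i * ((g * (b / g)) * (a / g)) := by rw [hgb]; ring
    _ = i * ((g * (a / g)) * (b / g)) := by ring
    _ = a * (i * (b / g)) := by rw [hga]; ring
  rw [w_E, key, ← Nat.mul_add, Nat.add_sub_cancel' hib]

lemma w_SP_SJ {a b n : ℕ} {u : Fin 2 →₀ ℕ} (h : u ∈ SP (SJ a b) n) :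
    w a b u = n * (a * b) := by
  induction n generalizing u with
  | zero => simp only [SP, Set.mem_singleton_iff] at h; subst h; simp [w]
  | succ n ih =>
    obtain ⟨s, hs, t, ht, rfl⟩ := h
    rw [w_add, w_SJ hs, ih ht]; ring

lemma w_SP_SA {a b n : ℕ} {A : Finset ℕ} (hA2 : A ⊆ Finset.range (Nat.gcd a b + 1))
    {u : Fin 2 →₀ ℕ} (h : u ∈ SP (SA a b A) n) : w a b u = n * (a * b) := by
  induction n generalizing u with
  | zero => simp only [SP, Set.mem_singleton_iff] at h; subst h; simp [w]
  | succ n ih =>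
    obtain ⟨s, hs, t, ht, rfl⟩ := h
    rw [w_add, w_SA hA2 hs, ih ht]; ring

lemma w_Sρ_nat {a b : ℕ} {ρ : ℝ} (hρ : 1 ≤ ρ) {s : Fin 2 →₀ ℕ} (h : s ∈ Sρ a b ρ) :
    a * b ≤ w a b s := by
  have h' : ρ * ((a : ℝ) * (b : ℝ)) < (w a b s : ℝ) := h
  have hab : (0 : ℝ) ≤ (a : ℝ) * (b : ℝ) := by positivity
  have : ((a * b : ℕ) : ℝ) ≤ (w a b s : ℝ) := by push_cast; nlinarith
  exact_mod_cast this

/-- key divisibility lemma: products of heavy monomials land in `J`. -/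
lemma key_div {a b : ℕ} (ha : 0 < a) (hb : 0 < b) {s t : Fin 2 →₀ ℕ}
    (h : 2 * (a * b) ≤ w a b s + w a b t) : ∃ u ∈ SJ a b, u ≤ s + t := by
  by_cases hc : a ≤ (s + t) 0
  · refine ⟨E a 0, Or.inl rfl, ?_⟩
    intro i
    fin_cases i <;> simp <;> simpa using hc
  · by_cases hd : b ≤ (s + t) 1
    · refine ⟨E 0 b, Or.inr rfl, ?_⟩
      intro i
      fin_cases i <;> simp <;> simpa using hd
    · exfalso
      push_neg at hc hd
      have hw : w a b (s + t) = w a b s + w a b t := w_add a b s t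
      have hw2 : w a b (s + t) = b * ((s + t) 0) + a * ((s + t) 1) := rfl
      nlinarith [hw, hw2, h, hc, hd, ha, hb]

/-- the sumset engine: `x = s + t` with both heavy lands in `SJ + Sρ`. -/
lemma engine {a b : ℕ} (ha : 0 < a) (hb : 0 < b) {ρ : ℝ} {s t : Fin 2 →₀ ℕ}
    (hs : a * b ≤ w a b s) (ht : a * b ≤ w a b t)
    (hv : ρ * ((a : ℝ) * (b : ℝ)) < (w a b s : ℝ) + (w a b t : ℝ) - ((a * b : ℕ) : ℝ)) :
    s + t ∈ SJ a b + Sρ a b ρ := by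
  obtain ⟨u, hu, hle⟩ := key_div (s := s) (t := t) ha hb (by omega)
  refine ⟨u, hu, (s + t) - u, ?_, add_tsub_cancel_of_le hle⟩
  have hwu : w a b u = a * b := w_SJ hu
  have hsum : w a b u + w a b ((s + t) - u) = w a b s + w a b t := by
    rw [← w_add, add_tsub_cancel_of_le hle, w_add]
  have : (w a b ((s + t) - u) : ℝ) = (w a b s : ℝ) + (w a b t : ℝ) - ((a * b : ℕ) : ℝ) := by
    rw [hwu] at hsum
    have := congrArg (fun n : ℕ => (n : ℝ)) hsum
    push_cast at this ⊢
    linarith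
  show ρ * ((a : ℝ) * (b : ℝ)) < (w a b ((s + t) - u) : ℝ)
  rw [this]; exact hv

end Stmt14Aux

namespace Stmt14Aux

variable {K : Type*} [Field K]

lemma SJ_subset_SA {a b : ℕ} (ha : 0 < a) {A : Finset ℕ}
    (hA1 : ({0, Nat.gcd a b} : Finset ℕ) ⊆ A) : SJ a b ⊆ SA a b A := by
  have h0 : (0 : ℕ) ∈ A := hA1 (by simp)
  have hg : Nat.gcd a b ∈ A := hA1 (by simp)
  rintro u (rfl | rfl)
  · refine ⟨Nat.gcd a b, hg, ?_⟩
    show E (Nat.gcd a b * (a / Nat.gcd a b)) (b - Nat.gcd a b * (b / Nat.gcd a b)) = E a 0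
    rw [Nat.mul_div_cancel' (Nat.gcd_dvd_left a b), Nat.mul_div_cancel' (Nat.gcd_dvd_right a b),
      Nat.sub_self]
  · exact ⟨0, h0, by simp⟩

lemma SA_add_Sρ {a b : ℕ} (ha : 0 < a) (hb : 0 < b) {ρ : ℝ} (hρ : 1 ≤ ρ)
    {A : Finset ℕ} (hA2 : A ⊆ Finset.range (Nat.gcd a b + 1)) :
    SA a b A + Sρ a b ρ ⊆ SJ a b + Sρ a b ρ := by
  rintro x ⟨s, hs, t, ht, rfl⟩
  have hws : w a b s = a * b := w_SA hA2 hs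
  have hwt : ρ * ((a : ℝ) * (b : ℝ)) < (w a b t : ℝ) := ht
  refine engine ha hb (le_of_eq hws.symm) (w_Sρ_nat hρ ht) ?_
  rw [hws]
  push_cast
  linarith

lemma Sρ_add_Sρ {a b : ℕ} (ha : 0 < a) (hb : 0 < b) {ρ : ℝ} (hρ : 1 ≤ ρ) :
    Sρ a b ρ + Sρ a b ρ ⊆ SJ a b + Sρ a b ρ := by
  rintro x ⟨s, hs, t, ht, rfl⟩
  have hws : ρ * ((a : ℝ) * (b : ℝ)) < (w a b s : ℝ) := hs
  have hwt : ρ * ((a : ℝ) * (b : ℝ)) < (w a b t : ℝ) := ht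
  have hab : (0 : ℝ) ≤ (a : ℝ) * (b : ℝ) := by positivity
  refine engine ha hb (w_Sρ_nat hρ hs) (w_Sρ_nat hρ ht) ?_
  push_cast
  nlinarith

section Ideals

variable {a b : ℕ} {A : Finset ℕ} {ρ : ℝ}

/-- `I' * IA^m ≤ J^m * I'` -/
lemma Ip_mul_IA_pow (hIAIp : MI K (SA a b A) * MI K (Sρ a b ρ) ≤ MI K (SJ a b) * MI K (Sρ a b ρ))
    (m : ℕ) :
    MI K (Sρ a b ρ) * MI K (SA a b A) ^ m ≤ MI K (SJ a b) ^ m * MI K (Sρ a b ρ) := by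
  induction m with
  | zero => simp
  | succ m ih =>
    calc MI K (Sρ a b ρ) * MI K (SA a b A) ^ (m + 1)
        = MI K (SA a b A) * (MI K (Sρ a b ρ) * MI K (SA a b A) ^ m) := by ring
      _ ≤ MI K (SA a b A) * (MI K (SJ a b) ^ m * MI K (Sρ a b ρ)) :=
          Ideal.mul_mono_right ih
      _ = MI K (SJ a b) ^ m * (MI K (SA a b A) * MI K (Sρ a b ρ)) := by ring
      _ ≤ MI K (SJ a b) ^ m * (MI K (SJ a b) * MI K (Sρ a b ρ)) :=
          Ideal.mul_mono_right hIAIp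
      _ = MI K (SJ a b) ^ (m + 1) * MI K (Sρ a b ρ) := by ring

/-- the decomposition `I^(n+1) = IA^(n+1) + J^n * I'`. -/
lemma decomp (hJA : MI K (SJ a b) ≤ MI K (SA a b A))
    (hIAIp : MI K (SA a b A) * MI K (Sρ a b ρ) ≤ MI K (SJ a b) * MI K (Sρ a b ρ))
    (hIpIp : MI K (Sρ a b ρ) * MI K (Sρ a b ρ) ≤ MI K (SJ a b) * MI K (Sρ a b ρ)) (n : ℕ) :
    (MI K (SA a b A) + MI K (Sρ a b ρ)) ^ (n + 1)
      = MI K (SA a b A) ^ (n + 1) + MI K (SJ a b) ^ n * MI K (Sρ a b ρ) := by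
  set IA' := MI K (SA a b A)
  set Ip := MI K (Sρ a b ρ)
  set J' := MI K (SJ a b)
  induction n with
  | zero => simp
  | succ n ih =>
    have hle1 : IA' ≤ IA' + Ip := by rw [Ideal.add_eq_sup]; exact le_sup_left
    have hle2 : Ip ≤ IA' + Ip := by rw [Ideal.add_eq_sup]; exact le_sup_right
    apply le_antisymm
    · have h2 : J' ^ n * (IA' * Ip) ≤ J' ^ (n + 1) * Ip := by
        calc J' ^ n * (IA' * Ip) ≤ J' ^ n * (J' * Ip) := Ideal.mul_mono_right hIAIp
          _ = J' ^ (n + 1) * Ip := by ring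
      have h3 : Ip * IA' ^ (n + 1) ≤ J' ^ (n + 1) * Ip := Ip_mul_IA_pow hIAIp (n + 1)
      have h4 : J' ^ n * (Ip * Ip) ≤ J' ^ (n + 1) * Ip := by
        calc J' ^ n * (Ip * Ip) ≤ J' ^ n * (J' * Ip) := Ideal.mul_mono_right hIpIp
          _ = J' ^ (n + 1) * Ip := by ring
      calc (IA' + Ip) ^ (n + 2) = (IA' + Ip) * (IA' + Ip) ^ (n + 1) := by ring
        _ = (IA' + Ip) * (IA' ^ (n + 1) + J' ^ n * Ip) := by rw [ih]
        _ = IA' ^ (n + 2) + (J' ^ n * (IA' * Ip) + (Ip * IA' ^ (n + 1) + J' ^ n * (Ip * Ip))) := by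
            ring
        _ ≤ IA' ^ (n + 2) + J' ^ (n + 1) * Ip := by
            apply add_le_add le_rfl
            rw [Ideal.add_eq_sup, Ideal.add_eq_sup]
            exact sup_le h2 (sup_le h3 h4)
    · rw [Ideal.add_eq_sup]
      apply sup_le
      · exact Ideal.pow_right_mono hle1 (n + 2)
      · calc J' ^ (n + 1) * Ip ≤ (IA' + Ip) ^ (n + 1) * (IA' + Ip) :=
            Ideal.mul_mono (Ideal.pow_right_mono (le_trans hJA hle1) (n + 1)) hle2
          _ = (IA' + Ip) ^ (n + 2) := by ring

end Ideals

end Stmt14Aux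

namespace Stmt14Aux

variable {K : Type*} [Field K]

lemma Jab_eq (a b : ℕ) : Jab K a b = MI K (SJ a b) := by
  rw [Jab, MI, SJ, Set.image_insert_eq, Set.image_singleton, mono_eq, mono_eq]

lemma IA_eq (a b : ℕ) (A : Finset ℕ) : IA K a b A = MI K (SA a b A) := by
  rw [IA, MI, SA, Set.image_image]
  simp only [mono_eq]

lemma Ip_set_eq (a b : ℕ) (ρ : ℝ) :
    {f : MvPolynomial (Fin 2) K | ∃ c d : ℕ, f = mono K c d ∧
        ρ * ((a : ℝ) * (b : ℝ)) < ((b * c + a * d : ℕ) : ℝ)}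
      = (fun s => monomial s (1 : K)) '' (Sρ a b ρ) := by
  ext f
  constructor
  · rintro ⟨c, d, rfl, h⟩
    refine ⟨E c d, ?_, (mono_eq c d).symm⟩
    show ρ * ((a : ℝ) * (b : ℝ)) < (w a b (E c d) : ℝ)
    rwa [w_E]
  · rintro ⟨s, hs, rfl⟩
    refine ⟨s 0, s 1, by rw [mono_eq, E_eq], ?_⟩
    exact hs

/-- main equivalence for exponents `r ≥ 1`. -/
lemma main_equiv (a b : ℕ) (ha : 0 < a) (hb : 0 < b) (A : Finset ℕ)
    (hA2 : A ⊆ Finset.range (Nat.gcd a b + 1)) (ρ : ℝ) (hρ : 1 ≤ ρ)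
    (hJA : MI K (SJ a b) ≤ MI K (SA a b A))
    (hM2 : MI K (SA a b A) * MI K (Sρ a b ρ) ≤ MI K (SJ a b) * MI K (Sρ a b ρ))
    (hM3 : MI K (Sρ a b ρ) * MI K (Sρ a b ρ) ≤ MI K (SJ a b) * MI K (Sρ a b ρ)) (n : ℕ) :
    ((MI K (SA a b A) + MI K (Sρ a b ρ)) ^ (n + 2)
        = MI K (SJ a b) * (MI K (SA a b A) + MI K (Sρ a b ρ)) ^ (n + 1))
      ↔ MI K (SA a b A) ^ (n + 2) = MI K (SJ a b) * MI K (SA a b A) ^ (n + 1) := by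
  set IAk := MI K (SA a b A) with hIAk
  set Ip := MI K (Sρ a b ρ) with hIp
  set J' := MI K (SJ a b) with hJ'
  have hd1 := decomp (K := K) hJA hM2 hM3 (n + 1)
  have hd0 := decomp (K := K) hJA hM2 hM3 n
  have hRHS : J' * (IAk + Ip) ^ (n + 1) = J' * IAk ^ (n + 1) + J' ^ (n + 1) * Ip := by
    rw [hd0]; ring
  constructor
  · intro hEq
    have hsub : IAk ^ (n + 2) ≤ J' * IAk ^ (n + 1) + J' ^ (n + 1) * Ip := by
      have h1 : IAk ^ (n + 2) ≤ (IAk + Ip) ^ (n + 2) := by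
        rw [hd1, Ideal.add_eq_sup]; exact le_sup_left
      rw [hEq, hRHS] at h1
      exact h1
    -- translate to exponent sets
    rw [hIAk, hJ'] at hsub
    rw [MI_pow, MI_pow, MI_pow, MI_mul, MI_mul, MI_add] at hsub
    have hgen := MI_le_imp hsub
    have hle : MI K (SP (SA a b A) (n + 2)) ≤ MI K (SJ a b + SP (SA a b A) (n + 1)) := by
      apply MI_le_of
      intro s hs
      obtain ⟨t, ht, hts⟩ := hgen s hs
      rcases ht with ht | ht
      · exact ⟨t, ht, hts⟩
      · exfalso
        obtain ⟨p, hp, q, hq, rfl⟩ := ht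
        have hwp : w a b p = (n + 1) * (a * b) := w_SP_SJ hp
        have hwq : ρ * ((a : ℝ) * (b : ℝ)) < (w a b q : ℝ) := hq
        have hws : w a b s = (n + 2) * (a * b) := w_SP_SA hA2 hs
        have hwt : w a b (p + q) ≤ w a b s := w_mono a b hts
        rw [w_add, hwp, hws] at hwt
        have hab : (0 : ℝ) ≤ (a : ℝ) * (b : ℝ) := by positivity
        have hcast : ((n + 1 : ℕ) : ℝ) * ((a : ℝ) * (b : ℝ)) + (w a b q : ℝ)
            ≤ ((n + 2 : ℕ) : ℝ) * ((a : ℝ) * (b : ℝ)) := by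
          have := (Nat.cast_le (α := ℝ)).mpr hwt
          push_cast at this ⊢
          linarith
        push_cast at hcast
        nlinarith
    rw [← MI_mul, ← MI_pow, ← MI_pow] at hle
    apply le_antisymm hle
    calc J' * IAk ^ (n + 1) ≤ IAk * IAk ^ (n + 1) := Ideal.mul_mono_left hJA
      _ = IAk ^ (n + 2) := by ring
  · intro hEq
    rw [hd1, hEq, hRHS]

end Stmt14Aux


open Stmt14Aux in
theorem stmt14 (K : Type*) [Field K] (a b : ℕ) (ha : 0 < a) (hab : a ≤ b)
    (A : Finset ℕ) (hA1 : ({0, Nat.gcd a b} : Finset ℕ) ⊆ A)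
    (hA2 : A ⊆ Finset.range (Nat.gcd a b + 1)) (ρ : ℝ) (hρ : 1 ≤ ρ) :
    let I' : Ideal (MvPolynomial (Fin 2) K) :=
      Ideal.span {f | ∃ c d : ℕ, f = mono K c d ∧
        ρ * ((a : ℝ) * (b : ℝ)) < ((b * c + a * d : ℕ) : ℝ)}
    let I := IA K a b A + I'
    (IA K a b A = Jab K a b → I ^ 2 = Jab K a b * I)
    ∧ (IA K a b A ≠ Jab K a b → redNum K a b I = redNum K a b (IA K a b A)) := by
  intro I' I
  have hb : 0 < b := lt_of_lt_of_le ha hab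
  have hJe : Jab K a b = MI K (SJ a b) := Jab_eq a b
  have hIAe : IA K a b A = MI K (SA a b A) := IA_eq a b A
  have hI'e : I' = MI K (Sρ a b ρ) := by
    show Ideal.span _ = _
    rw [MI, Ip_set_eq]
  have hIe : I = MI K (SA a b A) + MI K (Sρ a b ρ) := by
    show IA K a b A + I' = _
    rw [hIAe, hI'e]
  have hJA : MI K (SJ a b) ≤ MI K (SA a b A) := MI_mono (SJ_subset_SA ha hA1)
  have hM2 : MI K (SA a b A) * MI K (Sρ a b ρ) ≤ MI K (SJ a b) * MI K (Sρ a b ρ) := by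
    rw [MI_mul, MI_mul]; exact MI_mono (SA_add_Sρ ha hb hρ hA2)
  have hM3 : MI K (Sρ a b ρ) * MI K (Sρ a b ρ) ≤ MI K (SJ a b) * MI K (Sρ a b ρ) := by
    rw [MI_mul, MI_mul]; exact MI_mono (Sρ_add_Sρ ha hb hρ)
  constructor
  · intro hIJ
    have h' : MI K (SA a b A) = MI K (SJ a b) := by rw [← hIAe, ← hJe, hIJ]
    rw [hIe, hJe, decomp hJA hM2 hM3 1, h']
    ring
  · intro hne
    rw [redNum, redNum]
    congr 1
    ext r
    simp only [Set.mem_setOf_eq]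
    cases r with
    | zero =>
      simp only [zero_add, pow_one, pow_zero, mul_one]
      constructor
      · intro h
        exfalso
        apply hne
        apply le_antisymm _ (by rw [hJe, hIAe]; exact hJA)
        calc IA K a b A ≤ I := by
              rw [hIe, ← hIAe, ← hI'e]
              show IA K a b A ≤ IA K a b A + I'
              rw [Ideal.add_eq_sup]; exact le_sup_left
          _ = Jab K a b := h
      · intro h
        exact absurd h hne
    | succ n =>
      rw [hIe, hJe, hIAe]
      exact main_equiv a b ha hb A hA2 ρ hρ hJA hM2 hM3 n
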